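/- arXiv:2010.07040 — 2 statements merged into one kernel-verified Lean document; each statement's English description precedes it below -/
import Mathlib

section
/- Let X be a complex Banach space, 𝕏 a compact topological space, 𝒯 : 𝕏 → L(X) a continuous family, and (𝒯ₙ)ₙ a sequence of continuous families converging to 𝒯 in the sup norm, i.e. sup_{x∈𝕏} ‖(𝒯ₙ)ₓ − 𝒯ₓ‖ → 0. Then limsup_{n→∞} σ_W(𝒯ₙ) ⊆ σ_W(𝒯); that is, for every λ ∉ σ_W(𝒯) there exist ε > 0 and N ∈ ℕ such that for all n ≥ N, no μ ∈ ℂ with |μ − λ| < ε belongs to σ_W(𝒯ₙ). (The map 𝒯 ↦ σ_W(𝒯) is upper semicontinuous.) -/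
/-- A bounded operator `T : X → X` is Fredholm if its kernel is finite-dimensional and
its range is closed and of finite codimension. -/
def IsFredholm {X : Type*} [NormedAddCommGroup X] [NormedSpace ℂ X] (T : X →L[ℂ] X) : Prop :=
  FiniteDimensional ℂ (LinearMap.ker (T : X →ₗ[ℂ] X)) ∧ IsClosed (LinearMap.range (T : X →ₗ[ℂ] X) : Set X) ∧
    FiniteDimensional ℂ (X ⧸ LinearMap.range (T : X →ₗ[ℂ] X))

/-- The Fredholm index `ind T = dim ker T - dim (X / ran T)`. -/
noncomputable def fredholmIndex {X : Type*} [NormedAddCommGroup X] [NormedSpace ℂ X]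
    (T : X →L[ℂ] X) : ℤ :=
  (Module.finrank ℂ (LinearMap.ker (T : X →ₗ[ℂ] X)) : ℤ) - (Module.finrank ℂ (X ⧸ LinearMap.range (T : X →ₗ[ℂ] X)) : ℤ)

/-- `T` is a Weyl operator if it is Fredholm of index `0`. -/
def IsWeyl {X : Type*} [NormedAddCommGroup X] [NormedSpace ℂ X] (T : X →L[ℂ] X) : Prop :=
  IsFredholm T ∧ fredholmIndex T = 0

/-- The Weyl spectrum of a family of operators:
`σ_W(𝒯) = {λ ∈ ℂ : ∃ x, 𝒯 x - λ • I is not Weyl}`. -/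
def weylSpectrum {X : Type*} [NormedAddCommGroup X] [NormedSpace ℂ X]
    {𝕏 : Type*} (𝒯 : 𝕏 → X →L[ℂ] X) : Set ℂ :=
  {z | ∃ x, ¬ IsWeyl (𝒯 x - z • 1)}

section Aux

open LinearMap Module

variable {X : Type*} [NormedAddCommGroup X] [NormedSpace ℂ X] [CompleteSpace X]

/-- `1 + F` is Weyl when `F` has finite rank. -/
lemma isWeyl_one_add (F : X →L[ℂ] X) [FiniteDimensional ℂ (LinearMap.range (F : X →ₗ[ℂ] X))] :
    IsWeyl (1 + F) := by
  set T : X →L[ℂ] X := 1 + F with hTdef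
  have hTx : ∀ x, T x = x + F x := fun x => by
    simp [hTdef]
  set V : Submodule ℂ X := LinearMap.range (F : X →ₗ[ℂ] X) with hV
  have hinv : ∀ x ∈ V, (T : X →ₗ[ℂ] X) x ∈ V := by
    intro x hx
    simpa [hTx] using V.add_mem hx (LinearMap.mem_range_self (F : X →ₗ[ℂ] X) x)
  set G : V →ₗ[ℂ] V := (T : X →ₗ[ℂ] X).restrict hinv with hG
  have hGapp : ∀ v : V, (G v : X) = T v := fun v => rfl
  -- kernel of T sits inside V
  have hkerle : LinearMap.ker (T : X →ₗ[ℂ] X) ≤ V := by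
    intro x hx
    have hx' : x + F x = 0 := by simpa [hTx] using hx
    rw [eq_neg_of_add_eq_zero_left hx']
    exact V.neg_mem (LinearMap.mem_range_self (F : X →ₗ[ℂ] X) x)
  have hkerG : LinearMap.ker G = (LinearMap.ker (T : X →ₗ[ℂ] X)).comap V.subtype := by
    rw [hG, LinearMap.ker_restrict]
  have eker : (LinearMap.ker G) ≃ₗ[ℂ] (LinearMap.ker (T : X →ₗ[ℂ] X)) := by
    rw [hkerG]
    exact Submodule.comapSubtypeEquivOfLe hkerle
  -- the quotient map restricted to V
  set R : Submodule ℂ X := LinearMap.range (T : X →ₗ[ℂ] X) with hR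
  set φ : V →ₗ[ℂ] X ⧸ R := R.mkQ ∘ₗ V.subtype with hφ
  have hφsurj : Function.Surjective φ := by
    intro q
    obtain ⟨x, rfl⟩ := R.mkQ_surjective q
    refine ⟨⟨-(F x), V.neg_mem (LinearMap.mem_range_self (F : X →ₗ[ℂ] X) x)⟩, ?_⟩
    show Submodule.Quotient.mk (-(F x)) = Submodule.Quotient.mk x
    rw [Submodule.Quotient.eq]
    exact ⟨-x, by simp only [map_neg, ContinuousLinearMap.coe_coe, hTx]; abel⟩
  have hkerφ : LinearMap.ker φ = LinearMap.range G := by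
    apply le_antisymm
    · rintro ⟨v, hvV⟩ hv
      have hvR : v ∈ R := by
        simpa [hφ, Submodule.mkQ_apply, Submodule.Quotient.mk_eq_zero] using hv
      obtain ⟨x, hx⟩ := hvR
      have hxV : x ∈ V := by
        have hxv : x = v - F x := by rw [← hx, ContinuousLinearMap.coe_coe, hTx]; abel
        rw [hxv]
        exact V.sub_mem hvV (LinearMap.mem_range_self (F : X →ₗ[ℂ] X) x)
      exact ⟨⟨x, hxV⟩, Subtype.ext hx⟩
    · rintro _ ⟨v, rfl⟩
      have : (G v : X) ∈ R := ⟨v, rfl⟩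
      simpa [hφ, Submodule.mkQ_apply, Submodule.Quotient.mk_eq_zero] using this
  have equot : (V ⧸ LinearMap.range G) ≃ₗ[ℂ] (X ⧸ R) := by
    rw [← hkerφ]
    exact LinearMap.quotKerEquivOfSurjective φ hφsurj
  -- finite dimensionality
  haveI hfinker : FiniteDimensional ℂ (LinearMap.ker (T : X →ₗ[ℂ] X)) := eker.finiteDimensional
  haveI hfinquot : FiniteDimensional ℂ (X ⧸ R) := equot.finiteDimensional
  -- index computation
  have hrank : finrank ℂ (LinearMap.range G) + finrank ℂ (LinearMap.ker G) = finrank ℂ V :=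
    LinearMap.finrank_range_add_finrank_ker G
  have hq : finrank ℂ (V ⧸ LinearMap.range G) + finrank ℂ (LinearMap.range G) = finrank ℂ V :=
    Submodule.finrank_quotient_add_finrank _
  have hindex : finrank ℂ (LinearMap.ker (T : X →ₗ[ℂ] X)) = finrank ℂ (X ⧸ R) := by
    rw [← eker.finrank_eq, ← equot.finrank_eq]
    omega
  -- closedness of the range
  obtain ⟨W, hW⟩ := Submodule.exists_isCompl R
  haveI hfinW : FiniteDimensional ℂ W := (R.quotientEquivOfIsCompl W hW).finiteDimensional
  obtain ⟨M, hMclosed, hMcompl⟩ :=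
    (Submodule.ClosedComplemented.of_finiteDimensional (LinearMap.ker (T : X →ₗ[ℂ] X))).exists_isClosed_isCompl
  haveI : CompleteSpace M := hMclosed.completeSpace_coe
  set Φ : (M × W) →L[ℂ] X := (T.comp M.subtypeL).coprod W.subtypeL with hΦ
  have hΦapp : ∀ p : M × W, Φ p = T (p.1 : X) + (p.2 : X) := fun p => rfl
  have hΦker : LinearMap.ker (Φ : (M × W) →ₗ[ℂ] X) = ⊥ := by
    rw [LinearMap.ker_eq_bot']
    rintro ⟨m, w⟩ hmw
    have h1 : T (m : X) + (w : X) = 0 := by simpa [hΦapp] using hmw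
    have hTm : T (m : X) = -(w : X) := eq_neg_of_add_eq_zero_left h1
    have hmem : T (m : X) ∈ R ⊓ W := ⟨⟨(m : X), rfl⟩, by rw [hTm]; exact W.neg_mem w.2⟩
    rw [hW.inf_eq_bot] at hmem
    have hw0 : (w : X) = 0 := by
      have := hTm.symm.trans hmem
      simpa [neg_eq_zero] using this
    have hm : (m : X) ∈ LinearMap.ker (T : X →ₗ[ℂ] X) ⊓ M := by
      constructor
      · exact LinearMap.mem_ker.mpr (by rw [ContinuousLinearMap.coe_coe, hTm, hw0, neg_zero])
      · exact m.2
    rw [hMcompl.inf_eq_bot] at hm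
    have hm0 : m = 0 := Subtype.ext (by simpa using hm)
    have hw0' : w = 0 := Subtype.ext hw0
    rw [hm0, hw0']
    rfl
  have hΦrange : LinearMap.range (Φ : (M × W) →ₗ[ℂ] X) = ⊤ := by
    rw [LinearMap.range_eq_top]
    intro x
    have hx : x ∈ R ⊔ W := by rw [hW.sup_eq_top]; trivial
    obtain ⟨r, hr, w, hw, rfl⟩ := Submodule.mem_sup.mp hx
    obtain ⟨y, rfl⟩ := hr
    have hy : y ∈ LinearMap.ker (T : X →ₗ[ℂ] X) ⊔ M := by rw [hMcompl.sup_eq_top]; trivial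
    obtain ⟨k, hk, m, hm, rfl⟩ := Submodule.mem_sup.mp hy
    refine ⟨(⟨m, hm⟩, ⟨w, hw⟩), ?_⟩
    rw [ContinuousLinearMap.coe_coe, hΦapp]
    simp only [LinearMap.mem_ker] at hk
    simp [map_add, hk]
  set e := ContinuousLinearEquiv.ofBijective Φ hΦker hΦrange with he
  have hRclosed : IsClosed (R : Set X) := by
    have hset : (R : Set X) = e '' ((Set.univ : Set M) ×ˢ ({0} : Set W)) := by
      ext x
      constructor
      · rintro ⟨y, rfl⟩
        have hy : y ∈ LinearMap.ker (T : X →ₗ[ℂ] X) ⊔ M := by rw [hMcompl.sup_eq_top]; trivial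
        obtain ⟨k, hk, m, hm, rfl⟩ := Submodule.mem_sup.mp hy
        refine ⟨(⟨m, hm⟩, 0), by simp, ?_⟩
        show Φ _ = _
        rw [hΦapp]
        simp only [LinearMap.mem_ker] at hk
        simp [map_add, hk]
      · rintro ⟨⟨m, w⟩, hmem, rfl⟩
        have hw : w = 0 := by simpa using hmem.2
        show Φ _ ∈ R
        rw [hΦapp, hw]
        simp only [Submodule.coe_zero, add_zero]
        exact ⟨(m : X), rfl⟩
    rw [hset]
    exact e.toHomeomorph.isClosedMap _ (isClosed_univ.prod isClosed_singleton)
  exact ⟨⟨hfinker, hRclosed, hfinquot⟩, by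
    unfold fredholmIndex
    rw [hindex]; ring⟩

/-- Composition with a unit on the left preserves Weyl-ness. -/
lemma isWeyl_unit_mul (u : (X →L[ℂ] X)ˣ) {B : X →L[ℂ] X} (hB : IsWeyl B) :
    IsWeyl ((u : X →L[ℂ] X) * B) := by
  obtain ⟨⟨hker, hclosed, hquot⟩, hind⟩ := hB
  set e : X ≃L[ℂ] X := ContinuousLinearEquiv.unitsEquiv ℂ X u with he
  have heu : ∀ x, e x = (u : X →L[ℂ] X) x := fun x => rfl
  have hkereq : LinearMap.ker (((u : X →L[ℂ] X) * B : X →L[ℂ] X) : X →ₗ[ℂ] X) = LinearMap.ker (B : X →ₗ[ℂ] X) := by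
    ext x
    simp only [LinearMap.mem_ker]
    constructor
    · intro h
      have : e (B x) = 0 := by rw [heu]; exact h
      exact (map_eq_zero_iff e e.injective).mp this
    · intro h
      show (u : X →L[ℂ] X) (B x) = 0
      rw [← ContinuousLinearMap.coe_coe B, h]; simp
  have hrangeeq : LinearMap.range (((u : X →L[ℂ] X) * B : X →L[ℂ] X) : X →ₗ[ℂ] X)
      = (LinearMap.range (B : X →ₗ[ℂ] X)).map (e : X →ₗ[ℂ] X) := by
    ext y
    constructor
    · rintro ⟨x, rfl⟩
      exact ⟨B x, ⟨x, rfl⟩, rfl⟩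
    · rintro ⟨w, ⟨x, rfl⟩, rfl⟩
      exact ⟨x, rfl⟩
  haveI := hker
  haveI := hquot
  have equot : (X ⧸ LinearMap.range (B : X →ₗ[ℂ] X)) ≃ₗ[ℂ] (X ⧸ LinearMap.range (((u : X →L[ℂ] X) * B : X →L[ℂ] X) : X →ₗ[ℂ] X)) :=
    Submodule.Quotient.equiv _ _ e.toLinearEquiv hrangeeq.symm
  refine ⟨⟨?_, ?_, ?_⟩, ?_⟩
  · rw [hkereq]; exact hker
  · have : (LinearMap.range (((u : X →L[ℂ] X) * B : X →L[ℂ] X) : X →ₗ[ℂ] X) : Set X)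
        = e '' (LinearMap.range (B : X →ₗ[ℂ] X) : Set X) := by
      rw [hrangeeq]
      rfl
    rw [this]
    exact e.toHomeomorph.isClosedMap _ hclosed
  · exact equot.finiteDimensional
  · unfold fredholmIndex at hind ⊢
    rw [hkereq, ← equot.finrank_eq]
    exact hind

/-- A unit plus a finite-rank operator is Weyl. -/
lemma isWeyl_unit_add (u : (X →L[ℂ] X)ˣ) (F : X →L[ℂ] X)
    [FiniteDimensional ℂ (LinearMap.range (F : X →ₗ[ℂ] X))] : IsWeyl ((u : X →L[ℂ] X) + F) := by
  have h1 : (u : X →L[ℂ] X) + F = (u : X →L[ℂ] X) * (1 + (↑u⁻¹ : X →L[ℂ] X) * F) := by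
    rw [mul_add, mul_one, ← mul_assoc, Units.mul_inv, one_mul]
  haveI : FiniteDimensional ℂ (LinearMap.range (((↑u⁻¹ : X →L[ℂ] X) * F : X →L[ℂ] X) : X →ₗ[ℂ] X)) := by
    have hle : LinearMap.range (((↑u⁻¹ : X →L[ℂ] X) * F : X →L[ℂ] X) : X →ₗ[ℂ] X)
        = (LinearMap.range (F : X →ₗ[ℂ] X)).map ((↑u⁻¹ : X →L[ℂ] X) : X →ₗ[ℂ] X) := by
      ext y
      constructor
      · rintro ⟨x, rfl⟩; exact ⟨F x, ⟨x, rfl⟩, rfl⟩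
      · rintro ⟨w, ⟨x, rfl⟩, rfl⟩; exact ⟨x, rfl⟩
    rw [hle]
    exact Module.Finite.map _ _
  rw [h1]
  exact isWeyl_unit_mul u (isWeyl_one_add _)

/-- A Weyl operator is a unit minus a finite-rank operator. -/
lemma IsWeyl.exists_unit_decomp {T : X →L[ℂ] X} (hT : IsWeyl T) :
    ∃ (u : (X →L[ℂ] X)ˣ) (F : X →L[ℂ] X),
      FiniteDimensional ℂ (LinearMap.range (F : X →ₗ[ℂ] X)) ∧ (u : X →L[ℂ] X) = T + F := by
  obtain ⟨⟨hker, hclosed, hquot⟩, hind⟩ := hT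
  haveI := hker
  haveI := hquot
  obtain ⟨P, hP⟩ := Submodule.ClosedComplemented.of_finiteDimensional (LinearMap.ker (T : X →ₗ[ℂ] X))
  have hfr : Module.finrank ℂ (LinearMap.ker (T : X →ₗ[ℂ] X))
      = Module.finrank ℂ (X ⧸ LinearMap.range (T : X →ₗ[ℂ] X)) := by
    unfold fredholmIndex at hind
    omega
  set L : (LinearMap.ker (T : X →ₗ[ℂ] X)) ≃ₗ[ℂ] (X ⧸ LinearMap.range (T : X →ₗ[ℂ] X)) := LinearEquiv.ofFinrankEq _ _ hfr
    with hL
  obtain ⟨s, hs⟩ := (LinearMap.range (T : X →ₗ[ℂ] X)).mkQ.exists_rightInverse_of_surjective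
    (by rw [Submodule.range_mkQ])
  have hs' : ∀ q, (LinearMap.range (T : X →ₗ[ℂ] X)).mkQ (s q) = q := fun q => DFunLike.congr_fun hs q
  set Jc : (LinearMap.ker (T : X →ₗ[ℂ] X)) →L[ℂ] X :=
    LinearMap.toContinuousLinearMap (s ∘ₗ (L : (LinearMap.ker (T : X →ₗ[ℂ] X)) →ₗ[ℂ] (X ⧸ LinearMap.range (T : X →ₗ[ℂ] X))))
    with hJc
  have hJapp : ∀ k : LinearMap.ker (T : X →ₗ[ℂ] X), Jc k = s (L k) := fun k => rfl
  set Fc : X →L[ℂ] X := Jc.comp P with hFc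
  have hFapp : ∀ x, Fc x = s (L (P x)) := fun x => rfl
  set S : X →L[ℂ] X := T + Fc with hS
  have hSapp : ∀ x, S x = T x + s (L (P x)) := fun x => by
    simp [hS, hFapp]
  have hmkT : ∀ x, (LinearMap.range (T : X →ₗ[ℂ] X)).mkQ (T x) = 0 := fun x => by
    rw [Submodule.mkQ_apply, Submodule.Quotient.mk_eq_zero]
    exact ⟨x, rfl⟩
  have hSker : LinearMap.ker (S : X →ₗ[ℂ] X) = ⊥ := by
    rw [LinearMap.ker_eq_bot']
    intro x hx
    have h0 : T x + s (L (P x)) = 0 := by rw [← hSapp]; exact hx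
    have h1 : L (P x) = 0 := by
      have := congrArg (LinearMap.range (T : X →ₗ[ℂ] X)).mkQ h0
      simpa [map_add, hmkT, hs'] using this
    have hPx : P x = 0 := L.map_eq_zero_iff.mp h1
    have hTx : T x = 0 := by
      have : s (L (P x)) = 0 := by rw [h1, map_zero]
      rw [this, add_zero] at h0
      exact h0
    have hxk : x ∈ LinearMap.ker (T : X →ₗ[ℂ] X) := hTx
    have := hP ⟨x, hxk⟩
    rw [hPx] at this
    simpa using congrArg Subtype.val this.symm
  have hSrange : LinearMap.range (S : X →ₗ[ℂ] X) = ⊤ := by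
    rw [LinearMap.range_eq_top]
    intro y
    set q := (LinearMap.range (T : X →ₗ[ℂ] X)).mkQ y with hq
    set k : LinearMap.ker (T : X →ₗ[ℂ] X) := L.symm q with hk
    have hys : y - s q ∈ LinearMap.range (T : X →ₗ[ℂ] X) := by
      rw [← Submodule.Quotient.mk_eq_zero, ← Submodule.mkQ_apply, map_sub]
      simp [hs', hq]
    obtain ⟨x₀, hx₀⟩ := hys
    refine ⟨x₀ - (P x₀ : X) + (k : X), ?_⟩
    have hT1 : T ((P x₀ : X)) = 0 := (P x₀).2
    have hT2 : T ((k : X)) = 0 := k.2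
    have hTxx : T (x₀ - (P x₀ : X) + (k : X)) = T x₀ := by
      simp [map_add, map_sub, hT1, hT2]
    have hPxx : P (x₀ - (P x₀ : X) + (k : X)) = k := by
      have h1 : P ((P x₀ : X)) = P x₀ := hP (P x₀)
      have h2 : P ((k : X)) = k := hP k
      simp [map_add, map_sub, h1, h2]
    rw [ContinuousLinearMap.coe_coe] at hx₀; rw [ContinuousLinearMap.coe_coe, hSapp, hTxx, hPxx, hx₀, hk]
    simp
  refine ⟨(ContinuousLinearEquiv.unitsEquiv ℂ X).symm
    (ContinuousLinearEquiv.ofBijective S hSker hSrange), Fc, ?_, ?_⟩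
  · have hle : LinearMap.range (Fc : X →ₗ[ℂ] X) ≤ LinearMap.range (Jc : (LinearMap.ker (T : X →ₗ[ℂ] X)) →ₗ[ℂ] X) := by
      rintro _ ⟨x, rfl⟩
      exact ⟨P x, rfl⟩
    haveI : FiniteDimensional ℂ (LinearMap.range (Jc : (LinearMap.ker (T : X →ₗ[ℂ] X)) →ₗ[ℂ] X)) := by
      have h5 : LinearMap.range (Jc : (LinearMap.ker (T : X →ₗ[ℂ] X)) →ₗ[ℂ] X)
          = LinearMap.range (Jc : (LinearMap.ker (T : X →ₗ[ℂ] X)) →ₗ[ℂ] X) := rfl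
      rw [h5]
      infer_instance
    exact Submodule.finiteDimensional_of_le hle
  · rfl

/-- Every operator on a finite-dimensional space (e.g. a subsingleton) is Weyl. -/
lemma isWeyl_of_finiteDimensional [FiniteDimensional ℂ X] (T : X →L[ℂ] X) : IsWeyl T := by
  refine ⟨⟨inferInstance, (LinearMap.range (T : X →ₗ[ℂ] X)).closed_of_finiteDimensional, inferInstance⟩, ?_⟩
  unfold fredholmIndex
  have h1 : Module.finrank ℂ (X ⧸ LinearMap.range (T : X →ₗ[ℂ] X))
      + Module.finrank ℂ (LinearMap.range (T : X →ₗ[ℂ] X)) = Module.finrank ℂ X :=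
    Submodule.finrank_quotient_add_finrank _
  have h2 : Module.finrank ℂ (LinearMap.range (T : X →ₗ[ℂ] X))
      + Module.finrank ℂ (LinearMap.ker (T : X →ₗ[ℂ] X)) = Module.finrank ℂ X :=
    LinearMap.finrank_range_add_finrank_ker (T : X →ₗ[ℂ] X)
  have h3 : LinearMap.range (T : X →ₗ[ℂ] X) = LinearMap.range (T : X →ₗ[ℂ] X) := rfl
  have h4 : LinearMap.ker (T : X →ₗ[ℂ] X) = LinearMap.ker (T : X →ₗ[ℂ] X) := rfl
  rw [h3, h4] at h2
  omega

/-- The set of Weyl operators is open. -/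
lemma isOpen_isWeyl : IsOpen {T : X →L[ℂ] X | IsWeyl T} := by
  rcases subsingleton_or_nontrivial X with hX | hX
  · haveI : FiniteDimensional ℂ X := Module.Finite.of_basis (Basis.empty X : Basis (Fin 0) ℂ X)
    have : {T : X →L[ℂ] X | IsWeyl T} = Set.univ :=
      Set.eq_univ_of_forall fun T => isWeyl_of_finiteDimensional T
    rw [this]
    exact isOpen_univ
  rw [Metric.isOpen_iff]
  intro T hT
  obtain ⟨u, F, hF, huTF⟩ := hT.exists_unit_decomp
  refine ⟨‖((u⁻¹ : (X →L[ℂ] X)ˣ) : X →L[ℂ] X)‖⁻¹, inv_pos.mpr (Units.norm_pos u⁻¹), ?_⟩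
  intro T' hT'
  rw [Metric.mem_ball, dist_eq_norm] at hT'
  have hE : ‖(T' - T : X →L[ℂ] X)‖ < ‖((u⁻¹ : (X →L[ℂ] X)ˣ) : X →L[ℂ] X)‖⁻¹ := hT'
  set u' := u.add (T' - T) hE with hu'
  have hu'val : (u' : X →L[ℂ] X) = (u : X →L[ℂ] X) + (T' - T) := rfl
  haveI : FiniteDimensional ℂ (LinearMap.range ((-F : X →L[ℂ] X) : X →ₗ[ℂ] X)) := by
    have hrn : LinearMap.range ((-F : X →L[ℂ] X) : X →ₗ[ℂ] X) = LinearMap.range (F : X →ₗ[ℂ] X) := by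
      ext y
      constructor
      · rintro ⟨x, rfl⟩; exact ⟨-x, by simp⟩
      · rintro ⟨x, rfl⟩; exact ⟨-x, by simp⟩
    rw [hrn]
    exact hF
  have hT'eq : T' = (u' : X →L[ℂ] X) + (-F) := by
    rw [hu'val, huTF]
    abel
  rw [Set.mem_setOf_eq, hT'eq]
  exact isWeyl_unit_add u' (-F)

end Aux

theorem weylSpectrum_upper_semicontinuous
    {X : Type*} [NormedAddCommGroup X] [NormedSpace ℂ X] [CompleteSpace X]
    {𝕏 : Type*} [TopologicalSpace 𝕏] [CompactSpace 𝕏]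
    (𝒯 : 𝕏 → X →L[ℂ] X) (h𝒯cont : Continuous 𝒯)
    (𝒯n : ℕ → 𝕏 → X →L[ℂ] X) (h𝒯ncont : ∀ n, Continuous (𝒯n n))
    (hconv : Filter.Tendsto (fun n => ⨆ x, ‖𝒯n n x - 𝒯 x‖) Filter.atTop (nhds 0)) :
    ∀ z ∉ weylSpectrum 𝒯, ∃ ε > 0, ∃ N : ℕ, ∀ n ≥ N,
      ∀ μ : ℂ, ‖μ - z‖ < ε → μ ∉ weylSpectrum (𝒯n n) := by
  intro z hz
  by_cases hne : Nonempty 𝕏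
  swap
  · refine ⟨1, one_pos, 0, fun n _ μ _ => ?_⟩
    rintro ⟨x, -⟩
    exact hne ⟨x⟩
  set f : 𝕏 → X →L[ℂ] X := fun x => 𝒯 x - z • 1 with hf
  have hfcont : Continuous f := h𝒯cont.sub continuous_const
  have hK : IsCompact (Set.range f) := isCompact_range hfcont
  have hsub : Set.range f ⊆ {T : X →L[ℂ] X | IsWeyl T} := by
    rintro _ ⟨x, rfl⟩
    by_contra h
    exact hz ⟨x, h⟩
  obtain ⟨δ, hδ, hth⟩ := hK.exists_thickening_subset_open isOpen_isWeyl hsub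
  have hev : ∀ᶠ n in Filter.atTop, (⨆ x, ‖𝒯n n x - 𝒯 x‖) < δ / 2 :=
    hconv.eventually (gt_mem_nhds (by linarith))
  obtain ⟨N, hN⟩ := Filter.eventually_atTop.mp hev
  refine ⟨δ / 2, by linarith, N, fun n hn μ hμ => ?_⟩
  rintro ⟨x, hx⟩
  apply hx
  have hbdd : BddAbove (Set.range fun y => ‖𝒯n n y - 𝒯 y‖) :=
    (isCompact_range (((h𝒯ncont n).sub h𝒯cont).norm)).bddAbove
  have h1 : ‖𝒯n n x - 𝒯 x‖ ≤ ⨆ y, ‖𝒯n n y - 𝒯 y‖ := le_ciSup hbdd x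
  have hdist : dist (𝒯n n x - μ • 1) (f x) < δ := by
    rw [dist_eq_norm]
    have heq : (𝒯n n x - μ • 1) - f x = (𝒯n n x - 𝒯 x) + ((z - μ) • (1 : X →L[ℂ] X)) := by
      rw [hf]
      dsimp only
      rw [sub_smul]
      abel
    rw [heq]
    have h2 : ‖(z - μ) • (1 : X →L[ℂ] X)‖ ≤ ‖z - μ‖ := by
      rw [show ‖(z - μ) • (1 : X →L[ℂ] X)‖ = ‖z - μ‖ * ‖(1 : X →L[ℂ] X)‖ from
        norm_smul (z - μ) (1 : X →L[ℂ] X)]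
      calc ‖z - μ‖ * ‖(1 : X →L[ℂ] X)‖ ≤ ‖z - μ‖ * 1 :=
            mul_le_mul_of_nonneg_left ContinuousLinearMap.norm_id_le (norm_nonneg _)
        _ = ‖z - μ‖ := mul_one _
    have h3 : ‖z - μ‖ < δ / 2 := by rwa [← norm_neg, neg_sub]
    calc ‖(𝒯n n x - 𝒯 x) + ((z - μ) • (1 : X →L[ℂ] X))‖
        ≤ ‖𝒯n n x - 𝒯 x‖ + ‖(z - μ) • (1 : X →L[ℂ] X)‖ := norm_add_le _ _
      _ < δ / 2 + δ / 2 := by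
          have := hN n hn
          apply add_lt_add_of_le_of_lt (le_trans h1 (le_of_lt this)) (lt_of_le_of_lt h2 h3)
      _ = δ := by ring
  have hmem : (𝒯n n x - μ • 1) ∈ Metric.thickening δ (Set.range f) :=
    Metric.mem_thickening_iff.mpr ⟨f x, ⟨x, rfl⟩, hdist⟩
  exact hth hmem
end

section
/- Let X be a complex Banach space, 𝕏 a compact topological space, 𝒯 : 𝕏 → L(X) a continuous family, and (𝒯ₙ)ₙ a sequence of continuous families converging to 𝒯 in the sup norm sup_{x∈𝕏} ‖(𝒯ₙ)ₓ − 𝒯ₓ‖ → 0. If the Fredholm spectra converge in the Kuratowski sense, lim_{n→∞} σ_e(𝒯ₙ) = σ_e(𝒯), then the Weyl spectra converge in the Kuratowski sense: lim_{n→∞} σ_W(𝒯ₙ) = σ_W(𝒯). -/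
/-- Kuratowski lower limit of a sequence of subsets of `ℂ`. -/
def setLimInf (A : ℕ → Set ℂ) : Set ℂ :=
  {z | ∀ ε > 0, ∃ N : ℕ, ∀ n ≥ N, ∃ μ ∈ A n, ‖μ - z‖ < ε}

/-- Kuratowski upper limit of a sequence of subsets of `ℂ`. -/
def setLimSup (A : ℕ → Set ℂ) : Set ℂ :=
  {z | ∀ ε > 0, ∀ N : ℕ, ∃ n ≥ N, ∃ μ ∈ A n, ‖μ - z‖ < ε}

/-- Kuratowski convergence of a sequence of subsets of `ℂ` to a set `S`. -/
def KuratowskiLim (A : ℕ → Set ℂ) (S : Set ℂ) : Prop :=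
  setLimInf A = S ∧ setLimSup A = S

/-- The Fredholm (essential) spectrum of a family of operators:
`σ_e(𝒯) = {λ ∈ ℂ : ∃ x, 𝒯 x - λ • I is not Fredholm}`. -/
def fredholmSpectrum {X : Type*} [NormedAddCommGroup X] [NormedSpace ℂ X]
    {𝕏 : Type*} (𝒯 : 𝕏 → X →L[ℂ] X) : Set ℂ :=
  {z | ∃ x, ¬ IsFredholm (𝒯 x - z • 1)}


section FredholmTheory

open Module

variable {W X Y Z : Type*} [NormedAddCommGroup W] [NormedSpace ℂ W]
  [NormedAddCommGroup X] [NormedSpace ℂ X] [NormedAddCommGroup Y] [NormedSpace ℂ Y]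
  [NormedAddCommGroup Z] [NormedSpace ℂ Z]

/-- Generalized Fredholm property for operators between different spaces. -/
def IsFredholmG (T : Y →L[ℂ] Z) : Prop :=
  FiniteDimensional ℂ (LinearMap.ker (T : Y →ₗ[ℂ] Z)) ∧ IsClosed (LinearMap.range (T : Y →ₗ[ℂ] Z) : Set Z) ∧
    FiniteDimensional ℂ (Z ⧸ LinearMap.range (T : Y →ₗ[ℂ] Z))

noncomputable def indG (T : Y →L[ℂ] Z) : ℤ :=
  (Module.finrank ℂ (LinearMap.ker (T : Y →ₗ[ℂ] Z)) : ℤ) - (Module.finrank ℂ (Z ⧸ LinearMap.range (T : Y →ₗ[ℂ] Z)) : ℤ)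

theorem isFredholmG_congr (Φ : W ≃L[ℂ] X) (Ψ : Y ≃L[ℂ] Z) (h : X →L[ℂ] Y) :
    (IsFredholmG ((Ψ : Y →L[ℂ] Z) ∘L h ∘L (Φ : W →L[ℂ] X)) ↔ IsFredholmG h) ∧
      indG ((Ψ : Y →L[ℂ] Z) ∘L h ∘L (Φ : W →L[ℂ] X)) = indG h := by
  set S : W →L[ℂ] Z := (Ψ : Y →L[ℂ] Z) ∘L h ∘L (Φ : W →L[ℂ] X) with hS
  have hker : (LinearMap.ker (S : W →ₗ[ℂ] Z)).map (Φ.toLinearEquiv : W →ₗ[ℂ] X) = LinearMap.ker (h : X →ₗ[ℂ] Y) := by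
    ext y
    simp only [Submodule.mem_map, LinearMap.mem_ker]
    constructor
    · rintro ⟨x, hx, rfl⟩
      have : Ψ (h (Φ x)) = 0 := hx
      simpa using Ψ.injective (by simpa using this)
    · intro hy
      refine ⟨Φ.symm y, ?_, by simp⟩
      show Ψ (h (Φ (Φ.symm y))) = 0
      simpa using hy
  have hrange : (LinearMap.range (h : X →ₗ[ℂ] Y)).map (Ψ.toLinearEquiv : Y →ₗ[ℂ] Z) = LinearMap.range (S : W →ₗ[ℂ] Z) := by
    ext z
    simp only [Submodule.mem_map, LinearMap.mem_range]
    constructor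
    · rintro ⟨y, ⟨x, rfl⟩, rfl⟩
      exact ⟨Φ.symm x, by simp [hS]⟩
    · rintro ⟨w, rfl⟩
      exact ⟨h (Φ w), ⟨Φ w, rfl⟩, rfl⟩
  have eker : (LinearMap.ker (S : W →ₗ[ℂ] Z)) ≃ₗ[ℂ] (LinearMap.ker (h : X →ₗ[ℂ] Y)) := by
    refine (Φ.toLinearEquiv.submoduleMap (LinearMap.ker (S : W →ₗ[ℂ] Z))).trans (LinearEquiv.ofEq _ _ hker)
  have erange : (LinearMap.range (h : X →ₗ[ℂ] Y)) ≃ₗ[ℂ] (LinearMap.range (S : W →ₗ[ℂ] Z)) := by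
    refine (Ψ.toLinearEquiv.submoduleMap (LinearMap.range (h : X →ₗ[ℂ] Y))).trans (LinearEquiv.ofEq _ _ hrange)
  have equot : (Y ⧸ LinearMap.range (h : X →ₗ[ℂ] Y)) ≃ₗ[ℂ] (Z ⧸ LinearMap.range (S : W →ₗ[ℂ] Z)) :=
    Submodule.Quotient.equiv _ _ Ψ.toLinearEquiv hrange
  have hclosed : IsClosed (LinearMap.range (S : W →ₗ[ℂ] Z) : Set Z) ↔ IsClosed (LinearMap.range (h : X →ₗ[ℂ] Y) : Set Y) := by
    have : (LinearMap.range (S : W →ₗ[ℂ] Z) : Set Z) = Ψ.toHomeomorph '' (LinearMap.range (h : X →ₗ[ℂ] Y) : Set Y) := by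
      rw [← hrange]; rfl
    rw [this, Ψ.toHomeomorph.isClosed_image]
  constructor
  · constructor
    · rintro ⟨h1, h2, h3⟩
      exact ⟨eker.finiteDimensional, hclosed.mp h2, equot.symm.finiteDimensional⟩
    · rintro ⟨h1, h2, h3⟩
      exact ⟨eker.symm.finiteDimensional, hclosed.mpr h2, equot.finiteDimensional⟩
  · unfold indG
    rw [eker.finrank_eq, equot.finrank_eq]


end FredholmTheory

section FredholmProd

variable {M N R F : Type*} [NormedAddCommGroup M] [NormedSpace ℂ M]
  [NormedAddCommGroup N] [NormedSpace ℂ N] [NormedAddCommGroup R] [NormedSpace ℂ R]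
  [NormedAddCommGroup F] [NormedSpace ℂ F]

open Module LinearMap ContinuousLinearMap

theorem isFredholmG_prodMap [FiniteDimensional ℂ N] [FiniteDimensional ℂ F]
    (A : M ≃L[ℂ] R) (G : N →L[ℂ] F) :
    IsFredholmG ((A : M →L[ℂ] R).prodMap G) ∧
      indG ((A : M →L[ℂ] R).prodMap G) = (finrank ℂ N : ℤ) - finrank ℂ F := by
  set P : M × N →L[ℂ] R × F := (A : M →L[ℂ] R).prodMap G with hP
  have hPapp : ∀ x : M × N, P x = (A x.1, G x.2) := fun x => rfl
  -- kernel equivalence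
  have eker : (LinearMap.ker (P : M × N →ₗ[ℂ] R × F)) ≃ₗ[ℂ] (LinearMap.ker (G : N →ₗ[ℂ] F)) :=
    { toFun := fun x => ⟨x.1.2, by
        have := x.2
        rw [LinearMap.mem_ker, ContinuousLinearMap.coe_coe, hPapp, Prod.mk_eq_zero] at this
        exact this.2⟩
      invFun := fun n => ⟨(0, n.1), by
        rw [LinearMap.mem_ker, ContinuousLinearMap.coe_coe, hPapp, Prod.mk_eq_zero]
        exact ⟨by simp, n.2⟩⟩
      map_add' := fun x y => rfl
      map_smul' := fun c x => rfl
      left_inv := fun x => by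
        have := x.2
        rw [LinearMap.mem_ker, ContinuousLinearMap.coe_coe, hPapp, Prod.mk_eq_zero] at this
        have h1 : x.1.1 = 0 := by
          have := this.1
          simpa using A.injective (by simpa using this)
        ext
        · simp [h1]
        · rfl
      right_inv := fun n => rfl }
  -- range description
  have hrange : (LinearMap.range (P : M × N →ₗ[ℂ] R × F) : Set (R × F)) =
      (Set.univ : Set R) ×ˢ (LinearMap.range (G : N →ₗ[ℂ] F) : Set F) := by
    ext z
    simp only [SetLike.mem_coe, LinearMap.mem_range, Set.mem_prod, Set.mem_univ, true_and]
    constructor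
    · rintro ⟨x, rfl⟩; exact ⟨x.2, rfl⟩
    · rintro ⟨n, hn⟩
      exact ⟨(A.symm z.1, n), by rw [ContinuousLinearMap.coe_coe] at hn; rw [ContinuousLinearMap.coe_coe, hPapp]; simp [hn]⟩
  have hclosed : IsClosed (LinearMap.range (P : M × N →ₗ[ℂ] R × F) : Set (R × F)) := by
    rw [hrange]
    exact isClosed_univ.prod (LinearMap.range (G : N →ₗ[ℂ] F)).closed_of_finiteDimensional
  -- cokernel equivalence
  set q : R × F →ₗ[ℂ] F ⧸ LinearMap.range (G : N →ₗ[ℂ] F) :=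
    (LinearMap.range (G : N →ₗ[ℂ] F)).mkQ ∘ₗ (LinearMap.snd ℂ R F) with hqdef
  have hqsurj : Function.Surjective q := by
    intro y
    obtain ⟨f, rfl⟩ := (LinearMap.range (G : N →ₗ[ℂ] F)).mkQ_surjective y
    exact ⟨(0, f), rfl⟩
  have hkerq : LinearMap.range (P : M × N →ₗ[ℂ] R × F) = LinearMap.ker q := by
    ext z
    have hq : q z = Submodule.Quotient.mk z.2 := rfl
    rw [LinearMap.mem_ker, hq, Submodule.Quotient.mk_eq_zero]
    constructor
    · rintro ⟨x, rfl⟩; exact ⟨x.2, rfl⟩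
    · rintro hz
      obtain ⟨n, hn⟩ := hz
      exact ⟨(A.symm z.1, n), by rw [ContinuousLinearMap.coe_coe] at hn; rw [ContinuousLinearMap.coe_coe, hPapp]; simp [hn]⟩
  have equot : ((R × F) ⧸ LinearMap.range (P : M × N →ₗ[ℂ] R × F)) ≃ₗ[ℂ] (F ⧸ LinearMap.range (G : N →ₗ[ℂ] F)) :=
    (Submodule.quotEquivOfEq _ _ hkerq).trans (q.quotKerEquivOfSurjective hqsurj)
  refine ⟨⟨eker.symm.finiteDimensional, hclosed, equot.symm.finiteDimensional⟩, ?_⟩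
  unfold indG
  rw [eker.finrank_eq, equot.finrank_eq]
  have h1 : finrank ℂ (LinearMap.range (G : N →ₗ[ℂ] F)) + finrank ℂ (LinearMap.ker (G : N →ₗ[ℂ] F)) = finrank ℂ N :=
    (G : N →ₗ[ℂ] F).finrank_range_add_finrank_ker
  have h2 : finrank ℂ (F ⧸ LinearMap.range (G : N →ₗ[ℂ] F)) + finrank ℂ (LinearMap.range (G : N →ₗ[ℂ] F)) = finrank ℂ F :=
    Submodule.finrank_quotient_add_finrank _
  have hk : LinearMap.ker (G : N →ₗ[ℂ] F) = LinearMap.ker (G : N →ₗ[ℂ] F) := rfl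
  have hr : LinearMap.range (G : N →ₗ[ℂ] F) = LinearMap.range (G : N →ₗ[ℂ] F) := rfl
  rw [hk, hr] at h1
  omega


theorem isFredholmG_of_corner [FiniteDimensional ℂ N] [FiniteDimensional ℂ F]
    (h : M × N →L[ℂ] R × F) (A : M ≃L[ℂ] R) (hA : ∀ m : M, (h (m, 0)).1 = A m) :
    IsFredholmG h ∧ indG h = (finrank ℂ N : ℤ) - finrank ℂ F := by
  set B : N →L[ℂ] R := (ContinuousLinearMap.fst ℂ R F) ∘L h ∘L (ContinuousLinearMap.inr ℂ M N)
    with hB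
  set C : M →L[ℂ] F := (ContinuousLinearMap.snd ℂ R F) ∘L h ∘L (ContinuousLinearMap.inl ℂ M N)
    with hC
  set D : N →L[ℂ] F := (ContinuousLinearMap.snd ℂ R F) ∘L h ∘L (ContinuousLinearMap.inr ℂ M N)
    with hD
  set G : N →L[ℂ] F := D - C ∘L (A.symm : R →L[ℂ] M) ∘L B with hG
  -- the row operation U : R × F ≃L R × F
  set u1 : R × F →L[ℂ] R × F := (ContinuousLinearMap.fst ℂ R F).prod
      ((C ∘L (A.symm : R →L[ℂ] M) ∘L (ContinuousLinearMap.fst ℂ R F)) +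
        ContinuousLinearMap.snd ℂ R F) with hu1
  set u2 : R × F →L[ℂ] R × F := (ContinuousLinearMap.fst ℂ R F).prod
      (ContinuousLinearMap.snd ℂ R F -
        (C ∘L (A.symm : R →L[ℂ] M) ∘L (ContinuousLinearMap.fst ℂ R F))) with hu2
  set U : (R × F) ≃L[ℂ] R × F := ContinuousLinearEquiv.equivOfInverse u1 u2
    (fun x => by simp [hu1, hu2]) (fun x => by simp [hu1, hu2]) with hU
  -- the column operation V : M × N ≃L M × N
  set v1 : M × N →L[ℂ] M × N := ((ContinuousLinearMap.fst ℂ M N) +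
      ((A.symm : R →L[ℂ] M) ∘L B ∘L (ContinuousLinearMap.snd ℂ M N))).prod
      (ContinuousLinearMap.snd ℂ M N) with hv1
  set v2 : M × N →L[ℂ] M × N := ((ContinuousLinearMap.fst ℂ M N) -
      ((A.symm : R →L[ℂ] M) ∘L B ∘L (ContinuousLinearMap.snd ℂ M N))).prod
      (ContinuousLinearMap.snd ℂ M N) with hv2
  set V : (M × N) ≃L[ℂ] M × N := ContinuousLinearEquiv.equivOfInverse v1 v2
    (fun x => by simp [hv1, hv2]) (fun x => by simp [hv1, hv2]) with hV
  have hsum : ∀ x : M × N, h x = ((A x.1 + B x.2), (C x.1 + D x.2)) := by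
    intro x
    have hx : ((x.1, (0:N)) : M × N) + ((0:M), x.2) = x := by simp
    conv_lhs => rw [← hx, map_add]
    apply Prod.ext
    · show (h (x.1, 0)).1 + (h ((0:M), x.2)).1 = _
      rw [hA x.1]; rfl
    · rfl
  have hVx : ∀ x : M × N, (V : (M × N) →L[ℂ] M × N) x = (x.1 + A.symm (B x.2), x.2) := by
    intro x; simp [hV, hv1]
  have hUx : ∀ y : R × F, (U : (R × F) →L[ℂ] R × F) y = (y.1, C (A.symm y.1) + y.2) := by
    intro y; simp [hU, hu1]
  have key : h = (U : (R × F) →L[ℂ] R × F) ∘L ((A : M →L[ℂ] R).prodMap G) ∘L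
      (V : (M × N) →L[ℂ] M × N) := by
    refine ContinuousLinearMap.ext fun x => ?_
    rw [ContinuousLinearMap.comp_apply, ContinuousLinearMap.comp_apply, hVx, hsum]
    have hmid : ((A : M →L[ℂ] R).prodMap G) (x.1 + A.symm (B x.2), x.2)
        = (A x.1 + B x.2, G x.2) := by
      have : A (x.1 + A.symm (B x.2)) = A x.1 + B x.2 := by
        rw [map_add, A.apply_symm_apply]
      exact Prod.ext this rfl
    rw [hmid, hUx]
    apply Prod.ext
    · rfl
    · show C x.1 + D x.2 = C (A.symm (A x.1 + B x.2)) + G x.2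
      rw [map_add, A.symm_apply_apply, map_add, hG]
      simp only [ContinuousLinearMap.sub_apply, ContinuousLinearMap.comp_apply,
        ContinuousLinearEquiv.coe_coe]
      abel
  obtain ⟨hiff, hind⟩ := isFredholmG_congr V U ((A : M →L[ℂ] R).prodMap G)
  obtain ⟨hfred, hidx⟩ := isFredholmG_prodMap A G
  rw [key]
  exact ⟨hiff.mpr hfred, hind.trans hidx⟩


end FredholmProd

section Stability

open Module LinearMap ContinuousLinearMap

set_option maxHeartbeats 2000000 in
theorem isFredholm_stability {X : Type*} [NormedAddCommGroup X] [NormedSpace ℂ X] [CompleteSpace X]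
    (T : X →L[ℂ] X) (hT : _root_.IsFredholm T) :
    ∃ δ > 0, ∀ S : X →L[ℂ] X, ‖S - T‖ < δ →
      _root_.IsFredholm S ∧ fredholmIndex S = fredholmIndex T := by
  obtain ⟨hkerfd, hclosed, hquotfd⟩ := hT
  haveI := hkerfd
  haveI := hquotfd
  set N := LinearMap.ker (T : X →ₗ[ℂ] X) with hN
  set R := LinearMap.range (T : X →ₗ[ℂ] X) with hR
  obtain ⟨M, hMclosed, hNM⟩ :=
    (Submodule.ClosedComplemented.of_finiteDimensional N).exists_isClosed_isCompl
  obtain ⟨F, hRF⟩ := R.exists_isCompl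
  haveI hFfd : FiniteDimensional ℂ F := (R.quotientEquivOfIsCompl F hRF).finiteDimensional
  have hFclosed : IsClosed (F : Set X) := F.closed_of_finiteDimensional
  have hNclosed : IsClosed (N : Set X) := N.closed_of_finiteDimensional
  haveI : CompleteSpace M := hMclosed.completeSpace_coe
  haveI : CompleteSpace R := hclosed.completeSpace_coe
  set e : (↥M × ↥N) ≃L[ℂ] X := M.prodEquivOfClosedCompl N hNM.symm hMclosed hNclosed with he
  set f : (↥R × ↥F) ≃L[ℂ] X := R.prodEquivOfClosedCompl F hRF hclosed hFclosed with hf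
  have he_apply : ∀ (m : M) (n : N), e (m, n) = (m : X) + (n : X) := fun m n => rfl
  have hf_apply : ∀ (r : R) (y : F), f (r, y) = (r : X) + (y : X) := fun r y => rfl
  -- the block form of an operator
  set blk : (X →L[ℂ] X) → (↥M × ↥N) →L[ℂ] ↥R × ↥F :=
    fun S => (f.symm : X →L[ℂ] ↥R × ↥F) ∘L S ∘L (e : (↥M × ↥N) →L[ℂ] X) with hblk
  have hfactor : ∀ S : X →L[ℂ] X,
      (f : (↥R × ↥F) →L[ℂ] X) ∘L (blk S) ∘L (e.symm : X →L[ℂ] ↥M × ↥N) = S := by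
    intro S
    refine ContinuousLinearMap.ext fun x => ?_
    simp [hblk]
  have hfsymmR : ∀ r : R, f.symm (r : X) = (r, (0 : F)) := by
    intro r
    rw [ContinuousLinearEquiv.symm_apply_eq, hf_apply]
    simp
  have hblk_corner : ∀ (S : X →L[ℂ] X) (m : M), (blk S (m, 0)).1 =
      (f.symm (S (m : X))).1 := by
    intro S m
    have : e (m, 0) = (m : X) := by rw [he_apply]; simp
    simp [hblk, this]
  -- the corner of T
  set AT : ↥M →L[ℂ] ↥R := (ContinuousLinearMap.fst ℂ ↥R ↥F) ∘L (blk T) ∘L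
    (ContinuousLinearMap.inl ℂ ↥M ↥N) with hAT
  have hATval : ∀ m : M, (AT m : X) = T (m : X) := by
    intro m
    have h1 : AT m = (blk T (m, 0)).1 := rfl
    have h2 : T (m : X) ∈ R := ⟨m, rfl⟩
    rw [h1, hblk_corner]
    rw [show T (m : X) = ((⟨T (m : X), h2⟩ : R) : X) from rfl, hfsymmR]
  have hATinj : LinearMap.ker (AT : ↥M →ₗ[ℂ] ↥R) = ⊥ := by
    rw [LinearMap.ker_eq_bot, ContinuousLinearMap.coe_coe]
    intro m₁ m₂ hm
    have h1 : T (m₁ : X) = T (m₂ : X) := by rw [← hATval, ← hATval, hm]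
    have h2 : ((m₁ : X) - m₂) ∈ N := by
      rw [hN, LinearMap.mem_ker, ContinuousLinearMap.coe_coe, map_sub, h1, sub_self]
    have h3 : ((m₁ : X) - m₂) ∈ M := sub_mem m₁.2 m₂.2
    have h4 : ((m₁ : X) - m₂) ∈ N ⊓ M := ⟨h2, h3⟩
    rw [hNM.inf_eq_bot] at h4
    have h5 : ((m₁ : X) - m₂) = 0 := h4
    exact Subtype.ext (sub_eq_zero.mp h5)
  have hATsurj : LinearMap.range (AT : ↥M →ₗ[ℂ] ↥R) = ⊤ := by
    rw [LinearMap.range_eq_top]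
    intro r
    obtain ⟨x, hx⟩ := r.2
    set p := e.symm x with hp
    have hpe : e p = x := e.apply_symm_apply x
    have hxsum : (p.1 : X) + (p.2 : X) = x := by
      rw [← he_apply p.1 p.2]; exact hpe
    have hTp2 : T (p.2 : X) = 0 := p.2.2
    have hTp1 : T (p.1 : X) = (r : X) := by
      have : T ((p.1 : X) + (p.2 : X)) = (r : X) := by rw [hxsum]; exact hx
      rwa [map_add, hTp2, add_zero] at this
    refine ⟨p.1, ?_⟩
    exact Subtype.ext (by rw [ContinuousLinearMap.coe_coe, hATval, hTp1])
  set ATe : ↥M ≃L[ℂ] ↥R := ContinuousLinearEquiv.ofBijective AT hATinj hATsurj with hATe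
  set c : ℝ := ‖(f.symm : X →L[ℂ] ↥R × ↥F)‖ with hc
  set k : ℝ := ‖(ATe.symm : ↥R →L[ℂ] ↥M)‖ with hk
  have hcnn : 0 ≤ c := hc ▸ ContinuousLinearMap.opNorm_nonneg _
  have hknn : 0 ≤ k := hk ▸ ContinuousLinearMap.opNorm_nonneg _
  set δ : ℝ := 1 / ((k + 1) * (c + 1)) with hδ
  have hδpos : 0 < δ := one_div_pos.mpr (by nlinarith)
  refine ⟨δ, hδpos, fun S hS => ?_⟩
  -- the corner of S
  set AS : ↥M →L[ℂ] ↥R := (ContinuousLinearMap.fst ℂ ↥R ↥F) ∘L (blk S) ∘L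
    (ContinuousLinearMap.inl ℂ ↥M ↥N) with hAS
  have hASapp : ∀ m : M, AS m = (blk S (m, 0)).1 := fun m => rfl
  have hdiff : ‖AS - AT‖ ≤ c * ‖S - T‖ := by
    refine ContinuousLinearMap.opNorm_le_bound _ (mul_nonneg hcnn (norm_nonneg (S - T))) fun m => ?_
    have h1 : (AS - AT) m = (f.symm ((S - T) (e (m, 0)))).1 := by
      simp [hAS, hAT, hblk]
    rw [h1]
    calc ‖(f.symm ((S - T) (e (m, 0)))).1‖ ≤ ‖f.symm ((S - T) (e (m, 0)))‖ :=
          norm_fst_le _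
      _ ≤ c * ‖(S - T) (e (m, 0))‖ :=
          (f.symm : X →L[ℂ] ↥R × ↥F).le_opNorm _
      _ ≤ c * (‖S - T‖ * ‖e (m, 0)‖) := by
          exact mul_le_mul_of_nonneg_left ((S - T).le_opNorm _) hcnn
      _ = c * ‖S - T‖ * ‖m‖ := by
          have : e (m, 0) = (m : X) := by rw [he_apply]; simp
          rw [this]
          have : ‖(m : X)‖ = ‖m‖ := rfl
          rw [this]; ring
  set u : ↥M →L[ℂ] ↥M := (ATe.symm : ↥R →L[ℂ] ↥M) ∘L AS with hu
  have hone : ‖(1 : ↥M →L[ℂ] ↥M) - u‖ < 1 := by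
    have hb : ‖(1 : ↥M →L[ℂ] ↥M) - u‖ ≤ k * ‖AT - AS‖ := by
      refine ContinuousLinearMap.opNorm_le_bound _ (mul_nonneg hknn (norm_nonneg (AT - AS))) fun m => ?_
      have h1 : ((1 : ↥M →L[ℂ] ↥M) - u) m = ATe.symm ((AT - AS) m) := by
        have h2 : ATe.symm (AT m) = m := by
          have : AT m = ATe m := rfl
          rw [this, ATe.symm_apply_apply]
        simp only [ContinuousLinearMap.sub_apply, ContinuousLinearMap.one_apply, map_sub, h2]
        rfl
      rw [h1]
      calc ‖ATe.symm ((AT - AS) m)‖ ≤ k * ‖(AT - AS) m‖ :=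
            (ATe.symm : ↥R →L[ℂ] ↥M).le_opNorm _
        _ ≤ k * (‖AT - AS‖ * ‖m‖) :=
            mul_le_mul_of_nonneg_left ((AT - AS).le_opNorm _) hknn
        _ = k * ‖AT - AS‖ * ‖m‖ := by ring
    have h2 : ‖AT - AS‖ = ‖AS - AT‖ := norm_sub_rev AT AS
    have h3 : k * ‖AT - AS‖ ≤ k * (c * ‖S - T‖) := by
      rw [h2]
      exact mul_le_mul_of_nonneg_left hdiff hknn
    have h4 : ‖S - T‖ < δ := hS
    have h5 : k * (c * ‖S - T‖) < 1 := by
      have hkc : k * c * δ < 1 := by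
        rw [hδ]
        rw [mul_one_div, div_lt_one (by nlinarith)]
        nlinarith
      have : k * c * ‖S - T‖ ≤ k * c * δ := by
        apply mul_le_mul_of_nonneg_left (le_of_lt h4) (mul_nonneg hknn hcnn)
      nlinarith [norm_nonneg (S - T)]
    calc ‖(1 : ↥M →L[ℂ] ↥M) - u‖ ≤ k * ‖AT - AS‖ := hb
      _ ≤ k * (c * ‖S - T‖) := h3
      _ < 1 := h5
  set w : (↥M →L[ℂ] ↥M)ˣ := Units.oneSub ((1 : ↥M →L[ℂ] ↥M) - u) hone with hw
  set uE : ↥M ≃L[ℂ] ↥M := ContinuousLinearEquiv.ofUnit w with huE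
  set ASe : ↥M ≃L[ℂ] ↥R := uE.trans ATe with hASe
  have hASeval : ∀ m : M, ASe m = AS m := by
    intro m
    have h1 : uE m = u m := by
      show ((1 : ↥M →L[ℂ] ↥M) - ((1 : ↥M →L[ℂ] ↥M) - u)) m = u m
      rw [sub_sub_cancel]
    have h2 : ASe m = ATe (uE m) := rfl
    rw [h2, h1]
    exact ATe.apply_symm_apply (AS m)
  have hcorner : ∀ m : M, ((blk S) (m, 0)).1 = ASe m := by
    intro m
    rw [hASeval m, hASapp]
  obtain ⟨hfred, hind⟩ := isFredholmG_of_corner (blk S) ASe hcorner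
  obtain ⟨hiff, hindeq⟩ := isFredholmG_congr e.symm f (blk S)
  rw [hfactor S] at hiff hindeq
  have hSfred : IsFredholmG S := hiff.mpr hfred
  have hSind : indG S = (finrank ℂ ↥N : ℤ) - finrank ℂ ↥F := hindeq.trans hind
  have hTind : fredholmIndex T = (finrank ℂ ↥N : ℤ) - finrank ℂ ↥F := by
    unfold fredholmIndex
    rw [(R.quotientEquivOfIsCompl F hRF).finrank_eq]
  refine ⟨hSfred, ?_⟩
  rw [hTind]
  exact hSind


theorem isWeyl_stability {X : Type*} [NormedAddCommGroup X] [NormedSpace ℂ X]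
    [CompleteSpace X] (T : X →L[ℂ] X) (hT : IsWeyl T) :
    ∃ δ > 0, ∀ S : X →L[ℂ] X, ‖S - T‖ < δ → IsWeyl S := by
  obtain ⟨δ, hδpos, hδ⟩ := isFredholm_stability T hT.1
  exact ⟨δ, hδpos, fun S hS => ⟨(hδ S hS).1, ((hδ S hS).2).trans hT.2⟩⟩


end Stability

theorem weylSpectrum_continuity_of_fredholmSpectrum_continuity
    {X : Type*} [NormedAddCommGroup X] [NormedSpace ℂ X] [CompleteSpace X]
    {𝕏 : Type*} [TopologicalSpace 𝕏] [CompactSpace 𝕏]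
    (𝒯 : 𝕏 → X →L[ℂ] X) (h𝒯cont : Continuous 𝒯)
    (𝒯n : ℕ → 𝕏 → X →L[ℂ] X) (h𝒯ncont : ∀ n, Continuous (𝒯n n))
    (hconv : Filter.Tendsto (fun n => ⨆ x, ‖𝒯n n x - 𝒯 x‖) Filter.atTop (nhds 0))
    (he : KuratowskiLim (fun n => fredholmSpectrum (𝒯n n)) (fredholmSpectrum 𝒯)) :
    KuratowskiLim (fun n => weylSpectrum (𝒯n n)) (weylSpectrum 𝒯) := by
  have hbdd : ∀ (n : ℕ) (x : 𝕏), ‖𝒯n n x - 𝒯 x‖ ≤ ⨆ x, ‖𝒯n n x - 𝒯 x‖ := by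
    intro n x
    have hcn : Continuous fun x => ‖𝒯n n x - 𝒯 x‖ := ((h𝒯ncont n).sub h𝒯cont).norm
    exact le_ciSup (isCompact_range hcn).bddAbove x
  have hsmall : ∀ δ > (0:ℝ), ∃ N : ℕ, ∀ n ≥ N, ∀ x, ‖𝒯n n x - 𝒯 x‖ < δ := by
    intro δ hδ
    obtain ⟨N, hN⟩ := Metric.tendsto_atTop.mp hconv δ hδ
    refine ⟨N, fun n hn x => ?_⟩
    have h1 := hN n hn
    rw [Real.dist_eq, sub_zero] at h1
    calc ‖𝒯n n x - 𝒯 x‖ ≤ ⨆ x, ‖𝒯n n x - 𝒯 x‖ := hbdd n x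
      _ ≤ |⨆ x, ‖𝒯n n x - 𝒯 x‖| := le_abs_self _
      _ < δ := h1
  -- Step 1
  have hWliminf : weylSpectrum 𝒯 ⊆ setLimInf (fun n => weylSpectrum (𝒯n n)) := by
    intro z hz
    obtain ⟨x, hx⟩ := hz
    intro ε hε
    by_cases hf : IsFredholm (𝒯 x - z • 1)
    · have hind : fredholmIndex (𝒯 x - z • 1) ≠ 0 := fun h0 => hx ⟨hf, h0⟩
      obtain ⟨δ, hδpos, hδ⟩ := isFredholm_stability _ hf
      obtain ⟨N, hN⟩ := hsmall δ hδpos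
      refine ⟨N, fun n hn => ⟨z, ⟨x, fun hw => ?_⟩, by simpa using hε⟩⟩
      have hdiff : ‖(𝒯n n x - z • 1) - (𝒯 x - z • 1)‖ < δ := by
        have h2 : (𝒯n n x - z • 1) - (𝒯 x - z • 1) = 𝒯n n x - 𝒯 x := by abel
        rw [h2]; exact hN n hn x
      obtain ⟨hw1, hw2⟩ := hδ _ hdiff
      exact hind (hw2.symm.trans hw.2)
    · have hzE : z ∈ setLimInf (fun n => fredholmSpectrum (𝒯n n)) := by
        rw [he.1]; exact ⟨x, hf⟩
      obtain ⟨N, hN⟩ := hzE ε hε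
      refine ⟨N, fun n hn => ?_⟩
      obtain ⟨μ, hμ1, hμ2⟩ := hN n hn
      obtain ⟨y, hy⟩ := hμ1
      exact ⟨μ, ⟨y, fun hw => hy hw.1⟩, hμ2⟩
  -- openness of the Weyl set
  have hUopen : IsOpen {S : X →L[ℂ] X | IsWeyl S} := by
    rw [Metric.isOpen_iff]
    intro S hS
    obtain ⟨δ, hδpos, hδ⟩ := isWeyl_stability S hS
    exact ⟨δ, hδpos, fun S' hS' => hδ S' (by rwa [← dist_eq_norm])⟩
  -- uniform stability along the family
  have hH2 : ∀ z : ℂ, z ∉ weylSpectrum 𝒯 →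
      ∃ δ > 0, ∀ (x : 𝕏) (S : X →L[ℂ] X), ‖S - (𝒯 x - z • 1)‖ < δ → IsWeyl S := by
    intro z hz
    have hall : ∀ x, IsWeyl (𝒯 x - z • 1) := by
      intro x; by_contra h; exact hz ⟨x, h⟩
    have hKcomp : IsCompact (Set.range (fun x => 𝒯 x - z • 1)) :=
      isCompact_range (h𝒯cont.sub continuous_const)
    have hKsub : Set.range (fun x => 𝒯 x - z • 1) ⊆ {S | IsWeyl S} := by
      rintro _ ⟨x, rfl⟩; exact hall x
    obtain ⟨δ, hδpos, hδ⟩ := hKcomp.exists_thickening_subset_open hUopen hKsub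
    refine ⟨δ, hδpos, fun x S hS => ?_⟩
    apply hδ
    rw [Metric.mem_thickening_iff]
    exact ⟨𝒯 x - z • 1, ⟨x, rfl⟩, by rwa [dist_eq_norm]⟩
  -- Step 2
  have hlimsup : setLimSup (fun n => weylSpectrum (𝒯n n)) ⊆ weylSpectrum 𝒯 := by
    intro z hz
    by_contra hzW
    obtain ⟨δ, hδpos, hδ⟩ := hH2 z hzW
    have hzE : z ∉ setLimSup (fun n => fredholmSpectrum (𝒯n n)) := by
      rw [he.2]
      intro hc
      obtain ⟨x, hx⟩ := hc
      exact hzW ⟨x, fun hw => hx hw.1⟩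
    rw [setLimSup, Set.mem_setOf_eq] at hzE
    push_neg at hzE
    obtain ⟨ε₁, hε₁pos, N₁, hN₁⟩ := hzE
    obtain ⟨N₂, hN₂⟩ := hsmall (δ/2) (by linarith)
    have hεpos : (0:ℝ) < min ε₁ (δ/2) := lt_min hε₁pos (by linarith)
    obtain ⟨n, hn, μ, hμW, hμz⟩ := hz (min ε₁ (δ/2)) hεpos (max N₁ N₂)
    obtain ⟨x, hx⟩ := hμW
    have hnotE : ∀ y : 𝕏, IsFredholm (𝒯n n y - μ • 1) := by
      intro y
      by_contra hy
      have := hN₁ n (le_trans (le_max_left _ _) hn) μ ⟨y, hy⟩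
      have h2 : ‖μ - z‖ < ε₁ := lt_of_lt_of_le hμz (min_le_left _ _)
      linarith
    have hclose : ‖(𝒯n n x - μ • 1) - (𝒯 x - z • 1)‖ < δ := by
      have hid : (𝒯n n x - μ • (1 : X →L[ℂ] X)) - (𝒯 x - z • 1) =
          (𝒯n n x - 𝒯 x) + (z - μ) • 1 := by
        rw [sub_smul]; abel
      rw [hid]
      have hone : ‖(1 : X →L[ℂ] X)‖ ≤ 1 := ContinuousLinearMap.norm_id_le
      have h3 : ‖(z - μ) • (1 : X →L[ℂ] X)‖ ≤ ‖z - μ‖ := by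
        calc ‖(z - μ) • (1 : X →L[ℂ] X)‖ ≤ ‖z - μ‖ * ‖(1 : X →L[ℂ] X)‖ :=
              ContinuousLinearMap.opNorm_smul_le _ _
          _ ≤ ‖z - μ‖ * 1 := mul_le_mul_of_nonneg_left hone (norm_nonneg _)
          _ = ‖z - μ‖ := mul_one _
      have h4 : ‖z - μ‖ < δ/2 := by
        rw [norm_sub_rev]
        exact lt_of_lt_of_le hμz (min_le_right _ _)
      calc ‖(𝒯n n x - 𝒯 x) + (z - μ) • (1 : X →L[ℂ] X)‖
          ≤ ‖𝒯n n x - 𝒯 x‖ + ‖(z - μ) • (1 : X →L[ℂ] X)‖ := norm_add_le _ _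
        _ < δ/2 + δ/2 := by
            have := hN₂ n (le_trans (le_max_right _ _) hn) x
            have := lt_of_le_of_lt h3 h4
            linarith
        _ = δ := by ring
    exact hx (hδ x _ hclose)
  -- conclusion
  have hsub : setLimInf (fun n => weylSpectrum (𝒯n n)) ⊆
      setLimSup (fun n => weylSpectrum (𝒯n n)) := by
    intro z hz ε hε N
    obtain ⟨N', hN'⟩ := hz ε hε
    obtain ⟨μ, h⟩ := hN' (max N N') (le_max_right _ _)
    exact ⟨max N N', le_max_left _ _, μ, h⟩
  constructor
  · exact Set.Subset.antisymm (fun z hz => hlimsup (hsub hz)) hWliminf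
  · exact Set.Subset.antisymm hlimsup (fun z hz => hsub (hWliminf hz))
end
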